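/- Let T > 0, 0 < γ ≤ Γ ≤ T, and let Δt > 0 be such that K = T/Δt is a positive integer and γ/Δt and Γ/Δt are positive integers. Then for the nonnegative parts of the uncertainty sets: (a) for every δ ∈ D_K⁺, the piecewise constant function Lδ belongs to D⁺ (L(D_K⁺) ⊆ D⁺), and (b) L†(D⁺) = D_K⁺. -/

import Mathlib

open MeasureTheory Set

noncomputable section

/-- The continuous-time uncertainty set `D` of measurable frequency-deviation
scenarios `δ : [0,T] → [-1,1]` whose total absolute deviation over every
backward window of length `Γ` is at most `γ`. -/
def Dset (T Γ γ : ℝ) : Set (ℝ → ℝ) :=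
  {δ | Measurable δ ∧ (∀ t ∈ Icc (0:ℝ) T, δ t ∈ Icc (-1:ℝ) 1) ∧
    ∀ t ∈ Icc (0:ℝ) T, (∫ s in (max (t - Γ) 0)..t, |δ s|) ≤ γ}

/-- The nonnegative part `D⁺` of the continuous uncertainty set. -/
def DsetPlus (T Γ γ : ℝ) : Set (ℝ → ℝ) :=
  Dset T Γ γ ∩ {δ | ∀ t ∈ Icc (0:ℝ) T, δ t ∈ Icc (0:ℝ) 1}

/-- The discrete uncertainty set `D_K` (with `0`-based indexing): vectors in
`[-1,1]^K` whose sum of absolute values over each backward window of `W = Γ/Δt`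
periods is at most `g = γ/Δt`. -/
def DK (K W g : ℕ) : Set (Fin K → ℝ) :=
  {δ | (∀ l, |δ l| ≤ 1) ∧ ∀ k : Fin K,
    (∑ l ∈ Finset.univ.filter
      (fun l : Fin K => (k : ℕ) + 1 - W ≤ (l : ℕ) ∧ (l : ℕ) ≤ (k : ℕ)), |δ l|) ≤ (g : ℝ)}

/-- The nonnegative part `D_K⁺` of the discrete uncertainty set. -/
def DKplus (K W g : ℕ) : Set (Fin K → ℝ) :=
  DK K W g ∩ {δ | ∀ l, 0 ≤ δ l}

/-- The lifting operator `L` mapping a vector to the piecewise constant function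
with value `v k` on `[kΔt, (k+1)Δt)` (0-based), and `v (K-1)` at `t = KΔt`. -/
def lift (Δt : ℝ) {K : ℕ} (v : Fin K → ℝ) : ℝ → ℝ := fun t =>
  if h : min (⌊t / Δt⌋.toNat) (K - 1) < K then v ⟨min (⌊t / Δt⌋.toNat) (K - 1), h⟩ else 0

/-- The averaging operator `L†` mapping a function to its vector of averages
over the trading intervals. -/
def avg (Δt : ℝ) (K : ℕ) (w : ℝ → ℝ) : Fin K → ℝ := fun k =>
  (1 / Δt) * ∫ s in (((k : ℕ) : ℝ) * Δt)..((((k : ℕ) : ℝ) + 1) * Δt), w s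

/-- The integrand of the continuous-time state-of-charge. -/
def socIntegrand (ηp ηm : ℝ) (xb xr δ d : ℝ → ℝ) (s : ℝ) : ℝ :=
  ηp * max (xb s + δ s * xr s) 0 - (1 / ηm) * max (-(xb s + δ s * xr s)) 0 - d s

/-- The continuous-time state-of-charge `y(x^b, x^r, δ, y₀, t)`. -/
def soc (ηp ηm : ℝ) (xb xr δ d : ℝ → ℝ) (y0 t : ℝ) : ℝ :=
  y0 + ∫ s in (0:ℝ)..t, socIntegrand ηp ηm xb xr δ d s

/-- The discrete-time state-of-charge `y_k(𝐱^b, 𝐱^r, 𝛅, y₀)` (0-based indexing: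
the sum extends over the first `k` components). -/
def ysoc (Δt ηp ηm : ℝ) {K : ℕ} (xb xr δ d : Fin K → ℝ) (y0 : ℝ) (k : ℕ) : ℝ :=
  y0 + Δt * ∑ l ∈ Finset.univ.filter (fun l : Fin K => (l : ℕ) < k),
    (ηp * max (xb l + δ l * xr l) 0 - (1 / ηm) * max (-(xb l + δ l * xr l)) 0 - d l)

namespace Stmt5Aux

/-- ℕ-indexed version of the lift. -/
def liftn (Δt : ℝ) (K : ℕ) (v : ℕ → ℝ) : ℝ → ℝ := fun t =>
  v (min (⌊t / Δt⌋.toNat) (K - 1))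

lemma measurable_liftn (Δt : ℝ) (K : ℕ) (v : ℕ → ℝ) : Measurable (liftn Δt K v) := by
  have h2 : Measurable fun t : ℝ => ⌊t / Δt⌋ :=
    Int.measurable_floor.comp (measurable_id.div_const _)
  exact (measurable_from_top (f := fun n : ℤ => v (min n.toNat (K - 1)))).comp h2

lemma liftn_intervalIntegrable (Δt : ℝ) (K : ℕ) (v : ℕ → ℝ) {C : ℝ}
    (hv : ∀ i, |v i| ≤ C) (a b : ℝ) :
    IntervalIntegrable (liftn Δt K v) volume a b := by
  constructor <;>
  · refine Measure.integrableOn_of_bounded (M := C) measure_Ioc_lt_top.ne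
      (measurable_liftn Δt K v).aestronglyMeasurable ?_
    exact Filter.Eventually.of_forall fun x => by simpa [liftn] using hv _

lemma liftn_eq (Δt : ℝ) (hΔt : 0 < Δt) (K : ℕ) (v : ℕ → ℝ) {k : ℕ} (hk : k < K)
    {s : ℝ} (h1 : (k : ℝ) * Δt < s) (h2 : s < ((k : ℝ) + 1) * Δt) :
    liftn Δt K v s = v k := by
  have hf : ⌊s / Δt⌋ = (k : ℤ) := by
    rw [Int.floor_eq_iff]
    constructor
    · push_cast
      exact le_of_lt ((lt_div_iff₀ hΔt).mpr (by linarith))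
    · push_cast
      exact (div_lt_iff₀ hΔt).mpr (by linarith)
  have hmin : min (⌊s / Δt⌋.toNat) (K - 1) = k := by
    rw [hf]
    simp only [Int.toNat_natCast]
    omega
  unfold liftn
  rw [hmin]

lemma integral_liftn (Δt : ℝ) (hΔt : 0 < Δt) (K : ℕ) (v : ℕ → ℝ) {k : ℕ} (hk : k < K)
    {u : ℝ} (hu1 : (k : ℝ) * Δt ≤ u) (hu2 : u ≤ ((k : ℝ) + 1) * Δt) :
    ∫ s in ((k : ℝ) * Δt)..u, liftn Δt K v s = (u - (k : ℝ) * Δt) * v k := by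
  have hae : ∀ᵐ x, x ∈ Set.uIoc ((k : ℝ) * Δt) u → liftn Δt K v x = v k := by
    rw [MeasureTheory.ae_iff]
    refine measure_mono_null (fun x hx => ?_) (measure_singleton u)
    simp only [mem_setOf_eq, Classical.not_imp] at hx
    obtain ⟨hmem, hne⟩ := hx
    rw [uIoc_of_le hu1] at hmem
    by_contra hxu
    have hxu' : x ≠ u := hxu
    exact hne (liftn_eq Δt hΔt K v hk hmem.1
      (lt_of_lt_of_le (lt_of_le_of_ne hmem.2 hxu') hu2))
  rw [intervalIntegral.integral_congr_ae hae, intervalIntegral.integral_const]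
  simp [smul_eq_mul]

lemma integral_liftn_grid (Δt : ℝ) (hΔt : 0 < Δt) (K : ℕ) (v : ℕ → ℝ)
    (hC : ∀ i, |v i| ≤ 1) :
    ∀ k, k ≤ K → ∫ s in (0:ℝ)..((k : ℝ) * Δt), liftn Δt K v s
      = Δt * ∑ i ∈ Finset.range k, v i := by
  intro k
  induction k with
  | zero => simp
  | succ k ih =>
    intro hk
    have hkK : k < K := hk
    have h1 := ih hkK.le
    have hsplit := intervalIntegral.integral_add_adjacent_intervals
      (liftn_intervalIntegrable Δt K v hC 0 ((k : ℝ) * Δt))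
      (liftn_intervalIntegrable Δt K v hC ((k : ℝ) * Δt) (((k : ℝ) + 1) * Δt))
    have h2 := integral_liftn Δt hΔt K v hkK (u := ((k : ℝ) + 1) * Δt)
      (le_of_lt (by nlinarith)) le_rfl
    push_cast
    rw [← hsplit, h1, h2, Finset.sum_range_succ]
    ring

lemma integral_liftn_to (Δt : ℝ) (hΔt : 0 < Δt) (K : ℕ) (v : ℕ → ℝ)
    (hC : ∀ i, |v i| ≤ 1) {k : ℕ} (hk : k < K)
    {u : ℝ} (hu1 : (k : ℝ) * Δt ≤ u) (hu2 : u ≤ ((k : ℝ) + 1) * Δt) :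
    ∫ s in (0:ℝ)..u, liftn Δt K v s
      = Δt * ∑ i ∈ Finset.range k, v i + (u - (k : ℝ) * Δt) * v k := by
  rw [← intervalIntegral.integral_add_adjacent_intervals
      (liftn_intervalIntegrable Δt K v hC 0 ((k : ℝ) * Δt))
      (liftn_intervalIntegrable Δt K v hC ((k : ℝ) * Δt) u),
    integral_liftn_grid Δt hΔt K v hC k hk.le,
    integral_liftn Δt hΔt K v hk hu1 hu2]

set_option maxHeartbeats 1000000 in
lemma liftn_window (Δt : ℝ) (hΔt : 0 < Δt) (K W g : ℕ) (hW : 0 < W) (hWK : W ≤ K)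
    (v : ℕ → ℝ) (h0 : ∀ i, 0 ≤ v i) (h1 : ∀ i, v i ≤ 1)
    (hwin : ∀ k, k < K → ∑ i ∈ Finset.Icc (k + 1 - W) k, v i ≤ (g : ℝ))
    (t : ℝ) (ht0 : 0 ≤ t) (htT : t ≤ (K : ℝ) * Δt) :
    (∫ s in (max (t - (W : ℝ) * Δt) 0)..t, liftn Δt K v s) ≤ (g : ℝ) * Δt := by
  have hK : 0 < K := lt_of_lt_of_le hW hWK
  have habs : ∀ i, |v i| ≤ 1 := fun i => abs_le.mpr ⟨by linarith [h0 i], h1 i⟩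
  have hg0 : (0:ℝ) ≤ g := Nat.cast_nonneg g
  set n : ℕ := ⌊t / Δt⌋₊ with hn
  set k : ℕ := min n (K - 1) with hkdef
  have hkK : k < K := lt_of_le_of_lt (min_le_right _ _) (Nat.sub_lt hK one_pos)
  have htd : (0:ℝ) ≤ t / Δt := div_nonneg ht0 hΔt.le
  have hk1 : (k : ℝ) * Δt ≤ t := by
    have h : (k : ℝ) ≤ t / Δt :=
      le_trans (by exact_mod_cast Nat.cast_le.mpr (min_le_left n (K-1))) (Nat.floor_le htd)
    calc (k:ℝ) * Δt ≤ (t / Δt) * Δt := by nlinarith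
    _ = t := by field_simp
  have hk2 : t ≤ ((k : ℝ) + 1) * Δt := by
    rcases le_or_gt n (K - 1) with h | h
    · have hkn : k = n := min_eq_left h
      have h' := Nat.lt_floor_add_one (t / Δt)
      rw [← hn] at h'
      have h'' : t / Δt < (k : ℝ) + 1 := by rw [hkn]; exact_mod_cast h'
      calc t = (t / Δt) * Δt := by field_simp
      _ ≤ ((k:ℝ) + 1) * Δt := by nlinarith
    · have hkn : k = K - 1 := min_eq_right h.le
      have heq : ((k:ℝ) + 1) = (K : ℝ) := by
        rw [hkn]; push_cast [Nat.cast_sub hK]; ring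
      rw [heq]; exact htT
  have hck : 0 ≤ t - (k:ℝ) * Δt := by linarith
  have hcΔ : t - (k:ℝ) * Δt ≤ Δt := by nlinarith
  rcases le_or_gt t ((W : ℝ) * Δt) with hA | hB
  · -- t ≤ Γ : the window starts at 0
    have hmax : max (t - (W : ℝ) * Δt) 0 = 0 := max_eq_right (by linarith)
    rw [hmax, integral_liftn_to Δt hΔt K v habs hkK hk1 hk2]
    rcases lt_or_ge k W with hkW | hkW
    · have hIcc : Finset.range (k + 1) = Finset.Icc (k + 1 - W) k := by
        ext i; simp only [Finset.mem_range, Finset.mem_Icc]; omega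
      have hS := hwin k hkK
      rw [← hIcc, Finset.sum_range_succ] at hS
      nlinarith [h0 k, h1 k]
    · -- then t = kΔt and k = W
      have hWk : (W : ℝ) ≤ (k : ℝ) := by exact_mod_cast hkW
      have hteq : t = (k:ℝ) * Δt := by nlinarith
      have hkW2 : k ≤ W := by
        have hx1 : (k:ℝ) * Δt ≤ (W:ℝ) * Δt := by linarith
        have hx2 : (k:ℝ) ≤ (W:ℝ) := by nlinarith
        exact_mod_cast hx2
      have hkW3 : k = W := le_antisymm hkW2 hkW
      have hIcc : Finset.range k = Finset.Icc (k - 1 + 1 - W) (k - 1) := by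
        ext i; simp only [Finset.mem_range, Finset.mem_Icc]; omega
      have hS := hwin (k - 1) (by omega)
      rw [← hIcc] at hS
      have hzero : (t - (k:ℝ) * Δt) * v k = 0 := by rw [hteq]; ring
      rw [hzero]
      nlinarith
  · -- Γ < t
    have hmax : max (t - (W : ℝ) * Δt) 0 = t - (W : ℝ) * Δt := max_eq_left (by linarith)
    have hWKlt : W < K := by
      by_contra h
      have hWK' : W = K := le_antisymm hWK (not_lt.mp h)
      rw [hWK'] at hB; linarith
    have hWk : W ≤ k := by
      have hWn : W ≤ n := Nat.le_floor (by rw [le_div_iff₀ hΔt]; linarith)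
      omega
    set j : ℕ := k - W with hjdef
    have hjcast : (j : ℝ) = (k : ℝ) - (W : ℝ) := by
      rw [hjdef]; push_cast [Nat.cast_sub hWk]; ring
    have hjK : j < K := by omega
    have ha1 : (j : ℝ) * Δt ≤ t - (W:ℝ) * Δt := by
      rw [hjcast, sub_mul]; linarith
    have ha2 : t - (W:ℝ) * Δt ≤ ((j : ℝ) + 1) * Δt := by
      have expand : ((k:ℝ) - (W:ℝ) + 1) * Δt = ((k:ℝ)+1)*Δt - (W:ℝ)*Δt := by ring
      rw [hjcast, expand]; linarith
    have e1 := integral_liftn_to Δt hΔt K v habs hkK hk1 hk2 (u := t)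
    have e2 := integral_liftn_to Δt hΔt K v habs hjK ha1 ha2 (u := t - (W:ℝ) * Δt)
    rw [hmax, ← intervalIntegral.integral_interval_sub_left
      (liftn_intervalIntegrable Δt K v habs 0 t)
      (liftn_intervalIntegrable Δt K v habs 0 (t - (W:ℝ) * Δt)), e1, e2]
    have hjk : j < k := by omega
    set M : ℝ := ∑ i ∈ Finset.Ico (j + 1) k, v i with hM
    have hsum : ∑ i ∈ Finset.range k, v i = ∑ i ∈ Finset.range j, v i + (v j + M) := by
      have h1' : ∑ i ∈ Finset.Ico j k, v i
          = ∑ i ∈ Finset.range k, v i - ∑ i ∈ Finset.range j, v i :=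
        Finset.sum_Ico_eq_sub _ hjk.le
      have h2' : ∑ i ∈ Finset.Ico j k, v i = v j + M :=
        Finset.sum_eq_sum_Ico_succ_bot hjk _
      linarith
    have hS1 : v j + M ≤ (g : ℝ) := by
      have hS := hwin (k - 1) (by omega)
      have hIcc : Finset.Icc (k - 1 + 1 - W) (k - 1) = Finset.Ico j k := by
        ext i; simp only [Finset.mem_Ico, Finset.mem_Icc]; omega
      rw [hIcc, Finset.sum_eq_sum_Ico_succ_bot hjk] at hS
      exact hS
    have hS2 : M + v k ≤ (g : ℝ) := by
      have hS := hwin k hkK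
      have hIcc : Finset.Icc (k + 1 - W) k = Finset.Ico (j+1) (k+1) := by
        ext i; simp only [Finset.mem_Ico, Finset.mem_Icc]; omega
      rw [hIcc, Finset.sum_Ico_succ_top (by omega)] at hS
      exact hS
    have hc2 : t - (W:ℝ)*Δt - (j:ℝ)*Δt = t - (k:ℝ)*Δt := by rw [hjcast]; ring
    have hgen : ∀ Sj c : ℝ, 0 ≤ c → c ≤ Δt →
        Δt * (Sj + (v j + M)) + c * v k - (Δt * Sj + c * v j) ≤ (g:ℝ) * Δt := by
      intro Sj c hc0 hc1
      nlinarith [mul_nonneg (sub_nonneg.mpr hc1) (sub_nonneg.mpr hS1),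
        mul_nonneg hc0 (sub_nonneg.mpr hS2)]
    rw [hc2, hsum]
    exact hgen _ _ hck hcΔ

lemma sum_fin_filter (K a b : ℕ) (hb : b < K) (F : ℕ → ℝ) :
    ∑ l ∈ Finset.univ.filter (fun l : Fin K => a ≤ (l : ℕ) ∧ (l : ℕ) ≤ b), F (l : ℕ)
      = ∑ i ∈ Finset.Icc a b, F i := by
  rw [Finset.sum_filter,
    Fin.sum_univ_eq_sum_range (fun i => if a ≤ i ∧ i ≤ b then F i else 0),
    ← Finset.sum_filter]
  congr 1
  ext i
  simp only [Finset.mem_filter, Finset.mem_range, Finset.mem_Icc]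
  omega

lemma lift_eq_liftn (Δt : ℝ) {K : ℕ} (hK : 0 < K) (δ : Fin K → ℝ) :
    lift Δt δ = liftn Δt K (fun i => if h : i < K then δ ⟨i, h⟩ else 0) := by
  funext t
  have hlt : min (⌊t / Δt⌋.toNat) (K - 1) < K :=
    lt_of_le_of_lt (min_le_right _ _) (Nat.sub_lt hK one_pos)
  simp only [lift, liftn, dif_pos hlt]

lemma lift_mem (Δt : ℝ) (K W g : ℕ) (hΔt : 0 < Δt)
    (hg : 0 < g) (hgW : g ≤ W) (hWK : W ≤ K)
    (T Γ γ : ℝ) (hT : T = K * Δt) (hΓ : Γ = W * Δt) (hγ : γ = g * Δt)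
    (δ : Fin K → ℝ) (hδ : δ ∈ DKplus K W g) : lift Δt δ ∈ DsetPlus T Γ γ := by
  obtain ⟨⟨hb, hwinF⟩, hpos⟩ := hδ
  have hW : 0 < W := lt_of_lt_of_le hg hgW
  have hK : 0 < K := lt_of_lt_of_le hW hWK
  set v : ℕ → ℝ := fun i => if h : i < K then δ ⟨i, h⟩ else 0 with hv
  have hlift : lift Δt δ = liftn Δt K v := lift_eq_liftn Δt hK δ
  have h0 : ∀ i, 0 ≤ v i := by
    intro i; rw [hv]; dsimp only; split
    · exact hpos _
    · exact le_refl 0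
  have h1 : ∀ i, v i ≤ 1 := by
    intro i; rw [hv]; dsimp only; split
    · exact le_trans (le_abs_self _) (hb _)
    · norm_num
  have hwinN : ∀ k, k < K → ∑ i ∈ Finset.Icc (k + 1 - W) k, v i ≤ (g : ℝ) := by
    intro k hk
    rw [← sum_fin_filter K (k + 1 - W) k hk v]
    have he : ∀ l ∈ Finset.univ.filter
        (fun l : Fin K => k + 1 - W ≤ (l : ℕ) ∧ (l : ℕ) ≤ k), v (l : ℕ) = |δ l| := by
      intro l _
      rw [hv]; dsimp only; rw [dif_pos l.isLt, Fin.eta]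
      exact (abs_of_nonneg (hpos l)).symm
    rw [Finset.sum_congr rfl he]
    simpa using hwinF ⟨k, hk⟩
  have hval : ∀ t, 0 ≤ lift Δt δ t ∧ lift Δt δ t ≤ 1 := by
    intro t; rw [hlift]; exact ⟨h0 _, h1 _⟩
  refine ⟨⟨?_, ?_, ?_⟩, ?_⟩
  · rw [hlift]; exact measurable_liftn Δt K v
  · intro t _
    exact ⟨by linarith [(hval t).1], (hval t).2⟩
  · intro t ht
    have habs0 : ∀ s, |lift Δt δ s| = liftn Δt K v s := fun s => by
      rw [hlift]; exact abs_of_nonneg (by rw [← hlift]; exact (hval s).1)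
    rw [hγ, hΓ,
      intervalIntegral.integral_congr (g := liftn Δt K v) (fun s _ => habs0 s)]
    exact liftn_window Δt hΔt K W g hW hWK v h0 h1 hwinN t ht.1 (by rw [← hT]; exact ht.2)
  · intro t _
    exact ⟨(hval t).1, (hval t).2⟩

end Stmt5Aux

open Stmt5Aux in
/-- Proposition 3(ii): for the nonnegative parts of the
uncertainty sets, `L(D_K⁺) ⊆ D⁺` and `L†(D⁺) = D_K⁺`. -/
theorem stmt_5 (Δt : ℝ) (K W g : ℕ) (hΔt : 0 < Δt)
    (hg : 0 < g) (hgW : g ≤ W) (hWK : W ≤ K)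
    (T Γ γ : ℝ) (hT : T = K * Δt) (hΓ : Γ = W * Δt) (hγ : γ = g * Δt) :
    (∀ δ ∈ DKplus K W g, lift Δt δ ∈ DsetPlus T Γ γ) ∧
    (∀ δ ∈ DsetPlus T Γ γ, avg Δt K δ ∈ DKplus K W g) ∧
    (∀ v ∈ DKplus K W g, ∃ δ ∈ DsetPlus T Γ γ, avg Δt K δ = v) := by
  have hW : 0 < W := lt_of_lt_of_le hg hgW
  have hK : 0 < K := lt_of_lt_of_le hW hWK
  refine ⟨fun δ hδ => lift_mem Δt K W g hΔt hg hgW hWK T Γ γ hT hΓ hγ δ hδ, ?_, ?_⟩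
  · -- averaging maps D⁺ into D_K⁺
    intro δ hδ
    obtain ⟨⟨hmeas, hb1, hwinC⟩, hpos⟩ := hδ
    have hT0 : (0:ℝ) ≤ T := by rw [hT]; positivity
    have hmemIcc : ∀ {c d : ℝ} (x : ℝ), 0 ≤ c → d ≤ T → x ∈ Ioc c d → x ∈ Icc (0:ℝ) T :=
      fun x hc hd hx => ⟨le_trans hc hx.1.le, le_trans hx.2 hd⟩
    have hint : ∀ c d : ℝ, 0 ≤ c → d ≤ T → c ≤ d → IntervalIntegrable δ volume c d := by
      intro c d hc hd hcd
      rw [intervalIntegrable_iff_integrableOn_Ioc_of_le hcd]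
      refine Measure.integrableOn_of_bounded (M := 1) measure_Ioc_lt_top.ne
        hmeas.aestronglyMeasurable ?_
      refine (ae_restrict_iff' measurableSet_Ioc).mpr (Filter.Eventually.of_forall
        fun x hx => ?_)
      have h := hb1 x (hmemIcc x hc hd hx)
      rw [Real.norm_eq_abs, abs_le]
      exact ⟨h.1, h.2⟩
    have hup : ∀ k : Fin K, (0:ℝ) ≤ ((k:ℕ):ℝ)*Δt ∧ (((k:ℕ):ℝ)+1)*Δt ≤ T := by
      intro k
      constructor
      · positivity
      · rw [hT]
        have hc : ((k:ℕ):ℝ) + 1 ≤ (K:ℝ) := by exact_mod_cast Nat.succ_le_of_lt k.isLt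
        nlinarith
    have havg : ∀ k : Fin K, 0 ≤ avg Δt K δ k ∧ avg Δt K δ k ≤ 1 := by
      intro k
      obtain ⟨hl, hu⟩ := hup k
      have hle : ((k:ℕ):ℝ)*Δt ≤ (((k:ℕ):ℝ)+1)*Δt := by nlinarith
      constructor
      · apply mul_nonneg (by positivity)
        apply intervalIntegral.integral_nonneg hle
        intro u hu'
        exact (hpos u ⟨le_trans hl hu'.1, le_trans hu'.2 hu⟩).1
      · have hbd := intervalIntegral.norm_integral_le_of_norm_le_const (C := 1)
          (f := δ) (a := ((k:ℕ):ℝ)*Δt) (b := (((k:ℕ):ℝ)+1)*Δt) ?_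
        · have h2 : |∫ s in (((k:ℕ):ℝ)*Δt)..((((k:ℕ):ℝ)+1)*Δt), δ s| ≤ Δt := by
            rw [Real.norm_eq_abs] at hbd
            calc |∫ s in (((k:ℕ):ℝ)*Δt)..((((k:ℕ):ℝ)+1)*Δt), δ s|
                ≤ 1 * |(((k:ℕ):ℝ)+1)*Δt - ((k:ℕ):ℝ)*Δt| := hbd
              _ = Δt := by rw [abs_of_nonneg (by linarith)]; ring
          show (1/Δt) * _ ≤ 1
          calc (1/Δt) * (∫ s in (((k:ℕ):ℝ)*Δt)..((((k:ℕ):ℝ)+1)*Δt), δ s)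
              ≤ (1/Δt) * Δt :=
                mul_le_mul_of_nonneg_left (le_trans (le_abs_self _) h2) (by positivity)
            _ = 1 := by field_simp
        · intro x hx
          rw [uIoc_of_le hle] at hx
          have h := hb1 x (hmemIcc x hl hu hx)
          rw [Real.norm_eq_abs, abs_le]
          exact ⟨h.1, h.2⟩
    refine ⟨⟨fun l => abs_le.mpr ⟨by linarith [(havg l).1], (havg l).2⟩, ?_⟩,
      fun l => (havg l).1⟩
    intro k
    set a : ℕ := (k:ℕ) + 1 - W with hadef
    set t : ℝ := (((k:ℕ):ℝ)+1)*Δt with htdef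
    have hkK : (k:ℕ) < K := k.isLt
    have htT : t ≤ T := (hup k).2
    have ht0 : (0:ℝ) ≤ t := by rw [htdef]; positivity
    set F : ℕ → ℝ := fun i => if h : i < K then avg Δt K δ ⟨i, h⟩ else 0 with hF
    have he : ∀ l ∈ Finset.univ.filter
        (fun l : Fin K => (k:ℕ) + 1 - W ≤ (l : ℕ) ∧ (l : ℕ) ≤ (k:ℕ)),
        |avg Δt K δ l| = F (l : ℕ) := by
      intro l _
      rw [hF]; dsimp only; rw [dif_pos l.isLt, Fin.eta]
      exact abs_of_nonneg (havg l).1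
    rw [Finset.sum_congr rfl he, sum_fin_filter K a (k:ℕ) hkK F]
    have hFval : ∀ i ∈ Finset.Icc a (k:ℕ),
        F i = (1/Δt) * ∫ s in ((i:ℝ)*Δt)..(((i:ℝ)+1)*Δt), δ s := by
      intro i hi
      have hiK : i < K := lt_of_le_of_lt (Finset.mem_Icc.mp hi).2 hkK
      rw [hF]; dsimp only; rw [dif_pos hiK]; rfl
    rw [Finset.sum_congr rfl hFval, ← Finset.mul_sum]
    -- turn the sum of adjacent integrals into one integral
    set aa : ℕ → ℝ := fun m => ((a:ℝ) + m) * Δt with haa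
    have hak : a ≤ (k:ℕ) + 1 := by omega
    have hbound : ∀ m : ℕ, m ≤ (k:ℕ) + 1 - a → aa m ≤ T := by
      intro m hm
      rw [haa, hT]; dsimp only
      have : (a:ℝ) + (m:ℝ) ≤ (K:ℝ) := by
        have : a + m ≤ K := by omega
        exact_mod_cast this
      nlinarith
    have haa0 : ∀ m : ℕ, (0:ℝ) ≤ aa m := by
      intro m; rw [haa]; positivity
    have haamono : ∀ m : ℕ, aa m ≤ aa (m+1) := by
      intro m; rw [haa]; dsimp only; push_cast; nlinarith
    have hadj := intervalIntegral.sum_integral_adjacent_intervals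
      (f := δ) (μ := volume) (a := aa) (n := (k:ℕ)+1-a) (fun m hm => by
        apply hint _ _ (haa0 m) (hbound (m+1) (by omega)) (haamono m))
    have hIccR : ∑ i ∈ Finset.Icc a (k:ℕ), ∫ s in ((i:ℝ)*Δt)..(((i:ℝ)+1)*Δt), δ s
        = ∑ m ∈ Finset.range ((k:ℕ)+1-a), ∫ s in (aa m)..(aa (m+1)), δ s := by
      rw [← Finset.Ico_add_one_right_eq_Icc, Finset.sum_Ico_eq_sum_range]
      apply Finset.sum_congr rfl
      intro m _
      rw [haa]; dsimp only
      congr 1 <;> push_cast <;> ring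
    have haalast : aa ((k:ℕ)+1-a) = t := by
      rw [haa, htdef]; dsimp only
      rw [Nat.cast_sub hak]
      push_cast
      ring
    have haafirst : aa 0 = (a:ℝ)*Δt := by
      rw [haa]; dsimp only; push_cast; ring
    rw [hIccR, hadj, haalast, haafirst]
    have hacast : ((k:ℕ):ℝ) + 1 - (W:ℝ) ≤ (a:ℝ) := by
      rcases le_or_gt W ((k:ℕ)+1) with h | h
      · rw [hadef, Nat.cast_sub h]; push_cast; linarith
      · have ha0 : ((k:ℕ):ℝ) + 1 ≤ (W:ℝ) := by exact_mod_cast h.le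
        have ha1 : (0:ℝ) ≤ (a:ℝ) := Nat.cast_nonneg a
        linarith
    have hΓ0 : (0:ℝ) ≤ Γ := by rw [hΓ]; positivity
    have h1' : t - Γ ≤ (a:ℝ)*Δt := by
      have hmul := mul_le_mul_of_nonneg_right hacast hΔt.le
      have hexp : (((k:ℕ):ℝ)+1-(W:ℝ))*Δt = (((k:ℕ):ℝ)+1)*Δt - (W:ℝ)*Δt := by ring
      rw [hΓ, htdef]
      linarith [hmul, hexp.symm.le, hexp.le]
    have habt : (a:ℝ)*Δt ≤ t := by
      have : (a:ℝ) ≤ ((k:ℕ):ℝ) + 1 := by exact_mod_cast hak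
      rw [htdef]; nlinarith
    have hmaxle : max (t - Γ) 0 ≤ t := max_le (by linarith) ht0
    have hmono : (∫ s in ((a:ℝ)*Δt)..t, δ s) ≤ ∫ s in (max (t - Γ) 0)..t, δ s := by
      apply intervalIntegral.integral_mono_interval
        (max_le h1' (by positivity)) habt le_rfl
      · refine (ae_restrict_iff' measurableSet_Ioc).mpr (Filter.Eventually.of_forall
          fun x hx => ?_)
        exact (hpos x (hmemIcc x (le_max_right _ _) htT hx)).1
      · exact hint _ _ (le_max_right _ _) htT hmaxle
    have hcongr : (∫ s in (max (t - Γ) 0)..t, δ s)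
        = ∫ s in (max (t - Γ) 0)..t, |δ s| := by
      apply intervalIntegral.integral_congr
      intro s hs
      rw [uIcc_of_le hmaxle] at hs
      exact (abs_of_nonneg
        (hpos s ⟨le_trans (le_max_right _ _) hs.1, le_trans hs.2 htT⟩).1).symm
    have hfinal : (∫ s in ((a:ℝ)*Δt)..t, δ s) ≤ γ :=
      le_trans hmono (by rw [hcongr]; exact hwinC t ⟨ht0, htT⟩)
    calc (1/Δt) * (∫ s in ((a:ℝ)*Δt)..t, δ s) ≤ (1/Δt) * γ :=
        mul_le_mul_of_nonneg_left hfinal (by positivity)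
      _ = (g:ℝ) := by rw [hγ]; field_simp
  · -- L† ∘ L = id on D_K⁺
    intro v hv
    refine ⟨lift Δt v, lift_mem Δt K W g hΔt hg hgW hWK T Γ γ hT hΓ hγ v hv, ?_⟩
    funext k
    set w : ℕ → ℝ := fun i => if h : i < K then v ⟨i, h⟩ else 0 with hw
    have hlift : lift Δt v = liftn Δt K w := lift_eq_liftn Δt hK v
    show (1 / Δt) * (∫ s in (((k:ℕ):ℝ) * Δt)..((((k:ℕ):ℝ) + 1) * Δt), lift Δt v s) = v k
    rw [hlift, integral_liftn Δt hΔt K w k.isLt (le_of_lt (by nlinarith)) le_rfl]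
    have hwk : w (k:ℕ) = v k := by simp only [hw, dif_pos k.isLt, Fin.eta]
    rw [hwk]
    field_simp
    ring
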